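/- Let X = {x_1,…,x_k} (k ≥ 2) be a finite metric space and let C_X be the symmetric matrix with ones on the diagonal and (i,j) entry d(x_i,x_j) / (2 √(d(x_i,X∖{x_i}) d(x_j,X∖{x_j}))) for i ≠ j. Then C_X has at least two strictly positive eigenvalues. -/

import Mathlib

open Matrix BigOperators

/-- for a finite metric space on `k ≥ 2` points, the matrix `C_X`
with unit diagonal and `(i,j)` entry `d(x_i,x_j)/(2√(e_i e_j))` (where
`e_i = d(x_i, X∖{x_i})`) has at least two strictly positive eigenvalues. -/
theorem CX_two_positive_eigenvalues (k : ℕ) (hk : 2 ≤ k)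
    (d : Fin k → Fin k → ℝ) (e : Fin k → ℝ)
    (hd0 : ∀ i, d i i = 0) (hsymm : ∀ i j, d i j = d j i)
    (hpos : ∀ i j, i ≠ j → 0 < d i j)
    (htri : ∀ i j l, d i l ≤ d i j + d j l)
    (he : ∀ i, IsLeast {r : ℝ | ∃ j, j ≠ i ∧ r = d i j} (e i))
    (hherm : (Matrix.of fun i j : Fin k =>
        if i = j then (1 : ℝ)
        else d i j / (2 * Real.sqrt (e i * e j))).IsHermitian) :
    ∃ i j : Fin k, i ≠ j ∧ 0 < hherm.eigenvalues i ∧ 0 < hherm.eigenvalues j := by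
  by_contra hcon
  push_neg at hcon
  set A : Matrix (Fin k) (Fin k) ℝ := (Matrix.of fun i j : Fin k =>
      if i = j then (1 : ℝ)
      else d i j / (2 * Real.sqrt (e i * e j))) with hA
  set lam := hherm.eigenvalues with hlam
  -- there is at most one index with positive eigenvalue
  have i0 : Fin k := ⟨0, by omega⟩
  obtain ⟨m₀, hm₀⟩ : ∃ m₀ : Fin k, ∀ m, m ≠ m₀ → lam m ≤ 0 := by
    by_cases hex : ∃ m, 0 < lam m
    · obtain ⟨m₀, hm₀⟩ := hex
      exact ⟨m₀, fun m hm => by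
        by_contra hlt
        push_neg at hlt
        linarith [hcon m m₀ hm hlt]⟩
    · push_neg at hex
      exact ⟨i0, fun m _ => hex m⟩
  -- pick a pair (p, q) with minimal distance
  have hnonempty : ((Finset.univ.filter fun x : Fin k × Fin k => x.1 ≠ x.2)).Nonempty := by
    refine ⟨(⟨0, by omega⟩, ⟨1, by omega⟩), ?_⟩
    simp only [Finset.mem_filter, Finset.mem_univ, true_and]
    intro hx
    have := congrArg Fin.val hx
    simp at this
  obtain ⟨pq, hpq_mem, hmin⟩ := Finset.exists_min_image _ (fun x : Fin k × Fin k => d x.1 x.2)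
    hnonempty
  obtain ⟨p, q⟩ := pq
  have hne : p ≠ q := by
    simpa using (Finset.mem_filter.mp hpq_mem).2
  have hdpq : 0 < d p q := hpos p q hne
  -- e p = d p q
  have hep : e p = d p q := by
    obtain ⟨j₀, hj₀ne, hj₀⟩ := (he p).1
    have h1 : e p ≤ d p q := (he p).2 ⟨q, hne.symm, rfl⟩
    have h2 : d p q ≤ d p j₀ := hmin (p, j₀) (by simp [hj₀ne.symm])
    linarith [hj₀ ▸ h2]
  have heq : e q = d p q := by
    obtain ⟨j₁, hj₁ne, hj₁⟩ := (he q).1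
    have h1 : e q ≤ d q p := (he q).2 ⟨p, hne, rfl⟩
    have h2 : d p q ≤ d q j₁ := hmin (q, j₁) (by simp [hj₁ne.symm])
    rw [hsymm q p] at h1
    linarith [hj₁ ▸ h2]
  -- entries of A at p, q
  have hApq : A p q = 1 / 2 := by
    have : Real.sqrt (e p * e q) = d p q := by
      rw [hep, heq, Real.sqrt_mul_self hdpq.le]
    simp only [hA, Matrix.of_apply, if_neg hne, this]
    field_simp
  have hAqp : A q p = 1 / 2 := by
    have : Real.sqrt (e q * e p) = d p q := by
      rw [hep, heq, Real.sqrt_mul_self hdpq.le]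
    simp only [hA, Matrix.of_apply, if_neg (Ne.symm hne), this, hsymm q p]
    field_simp
  have hApp : A p p = 1 := by simp [hA]
  have hAqq : A q q = 1 := by simp [hA]
  -- the eigenvector unitary
  set U : Matrix (Fin k) (Fin k) ℝ := (hherm.eigenvectorUnitary : Matrix (Fin k) (Fin k) ℝ)
    with hU
  -- choose coefficients a b orthogonal to column m₀ of U
  obtain ⟨a, b, hab0, horth⟩ :
      ∃ a b : ℝ, (a ≠ 0 ∨ b ≠ 0) ∧ a * U p m₀ + b * U q m₀ = 0 := by
    by_cases h0 : U p m₀ = 0 ∧ U q m₀ = 0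
    · exact ⟨1, 0, Or.inl one_ne_zero, by rw [h0.1, h0.2]; ring⟩
    · refine ⟨U q m₀, -U p m₀, ?_, by ring⟩
      by_contra hc
      push_neg at hc
      exact h0 ⟨by simpa using hc.2, hc.1⟩
  set v : Fin k → ℝ := Pi.single p a + Pi.single q b with hv
  -- quadratic form value, computed directly
  have hQ1 : v ⬝ᵥ (A *ᵥ v) = a ^ 2 + a * b + b ^ 2 := by
    simp only [hv, Matrix.mulVec_add, Matrix.mulVec_single, add_dotProduct,
      single_dotProduct]
    simp only [Pi.add_apply, Pi.smul_apply, Matrix.col_apply, op_smul_eq_mul]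
    rw [hApp, hApq, hAqp, hAqq]
    ring
  -- quadratic form value, via spectrum
  set w : Fin k → ℝ := fun m => a * U p m + b * U q m with hw
  have hQ2 : v ⬝ᵥ (A *ᵥ v) = ∑ m, lam m * w m ^ 2 := by
    have hspec := hherm.spectral_theorem
    calc v ⬝ᵥ (A *ᵥ v)
        = v ⬝ᵥ ((U * Matrix.diagonal (RCLike.ofReal ∘ lam) * star U) *ᵥ v) := by
          rw [hspec]; rfl
      _ = (v ᵥ* U) ⬝ᵥ ((Matrix.diagonal (RCLike.ofReal ∘ lam) * star U) *ᵥ v) := by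
          rw [Matrix.mul_assoc, ← Matrix.mulVec_mulVec, Matrix.dotProduct_mulVec]
      _ = (v ᵥ* U) ⬝ᵥ (Matrix.diagonal (RCLike.ofReal ∘ lam) *ᵥ (star U *ᵥ v)) := by
          rw [Matrix.mulVec_mulVec]
      _ = ∑ m, lam m * w m ^ 2 := by
          have h1 : v ᵥ* U = w := by
            funext m
            simp [hv, hw, Matrix.add_vecMul, Matrix.single_vecMul]
          have hstar : star U = Uᵀ := by
            ext i j
            simp [Matrix.star_apply]
          have h2 : star U *ᵥ v = w := by
            rw [hstar, Matrix.mulVec_transpose, h1]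
          rw [h1, h2]
          simp only [dotProduct, Matrix.mulVec_diagonal]
          refine Finset.sum_congr rfl fun m _ => ?_
          simp [Function.comp]
          ring
  have hw0 : w m₀ = 0 := horth
  have hQle : v ⬝ᵥ (A *ᵥ v) ≤ 0 := by
    rw [hQ2]
    apply Finset.sum_nonpos
    intro m _
    by_cases hm : m = m₀
    · rw [hm, hw0]; simp
    · exact mul_nonpos_of_nonpos_of_nonneg (hm₀ m hm) (sq_nonneg _)
  have hQpos : 0 < v ⬝ᵥ (A *ᵥ v) := by
    rw [hQ1]
    rcases hab0 with ha | hb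
    · have : 0 < a ^ 2 := by positivity
      nlinarith [sq_nonneg (a + b), sq_nonneg b]
    · have : 0 < b ^ 2 := by positivity
      nlinarith [sq_nonneg (a + b), sq_nonneg a]
  linarith
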